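/- Let b : ℝ × ℝ^d → ℝ ∪ {+∞} be defined by b(m,w) = |w|^q/(q m^{q-1}) if m > 0, b(0,0) = 0, and b(m,w) = +∞ otherwise, where q > 1. Then b is a convex function on ℝ × ℝ^d. -/

import Mathlib

open scoped Classical

lemma norm_combo_rpow {E : Type*} [NormedAddCommGroup E] [NormedSpace ℝ E]
    {q : ℝ} (hq : 1 ≤ q) {a c : ℝ} (ha : 0 ≤ a) (hc : 0 ≤ c) (hac : a + c = 1)
    (x y : E) : ‖a • x + c • y‖ ^ q ≤ a * ‖x‖ ^ q + c * ‖y‖ ^ q := by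
  have h1 : ‖a • x + c • y‖ ≤ a * ‖x‖ + c * ‖y‖ := by
    calc ‖a • x + c • y‖ ≤ ‖a • x‖ + ‖c • y‖ := norm_add_le _ _
    _ = a * ‖x‖ + c * ‖y‖ := by rw [norm_smul, norm_smul, Real.norm_of_nonneg ha,
        Real.norm_of_nonneg hc]
  calc ‖a • x + c • y‖ ^ q ≤ (a * ‖x‖ + c * ‖y‖) ^ q :=
        Real.rpow_le_rpow (norm_nonneg _) h1 (zero_le_one.trans hq)
  _ = (a • ‖x‖ + c • ‖y‖) ^ q := by norm_num
  _ ≤ a • ‖x‖ ^ q + c • ‖y‖ ^ q :=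
      (convexOn_rpow hq).2 (norm_nonneg x) (norm_nonneg y) ha hc hac
  _ = a * ‖x‖ ^ q + c * ‖y‖ ^ q := by norm_num

lemma key_ineq' {E : Type*} [NormedAddCommGroup E] [NormedSpace ℝ E]
    {q : ℝ} (hq : 1 < q) {t m₁ m₂ m : ℝ} (hm₁ : 0 < m₁) (hm₂ : 0 < m₂)
    (ht : 0 ≤ t) (ht' : t ≤ 1) (hm_def : m = t * m₁ + (1 - t) * m₂) (w₁ w₂ : E) :
    ‖t • w₁ + (1 - t) • w₂‖ ^ q / (q * m ^ (q - 1))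
      ≤ t * (‖w₁‖ ^ q / (q * m₁ ^ (q - 1))) + (1 - t) * (‖w₂‖ ^ q / (q * m₂ ^ (q - 1))) := by
  have hm : 0 < m := by
    rcases eq_or_lt_of_le ht' with h | h
    · rw [hm_def, h]; norm_num [hm₁]
    · have h1 : 0 < (1 - t) * m₂ := mul_pos (by linarith) hm₂
      nlinarith [mul_nonneg ht hm₁.le]
  have ha : 0 ≤ t * m₁ / m := by positivity
  have hc : 0 ≤ (1 - t) * m₂ / m := by
    apply div_nonneg _ hm.le; nlinarith
  have hac : t * m₁ / m + (1 - t) * m₂ / m = 1 := by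
    rw [← add_div, ← hm_def, div_self hm.ne']
  have hEq : t • w₁ + (1 - t) • w₂
      = m • ((t * m₁ / m) • (m₁⁻¹ • w₁) + ((1 - t) * m₂ / m) • (m₂⁻¹ • w₂)) := by
    rw [smul_add, smul_smul, smul_smul, smul_smul, smul_smul]
    congr 1 <;> congr 1 <;> field_simp
  have hq0 : (0:ℝ) < q := lt_trans one_pos hq
  have step1 : ‖t • w₁ + (1 - t) • w₂‖ ^ q
      ≤ m ^ q * ((t * m₁ / m) * ‖m₁⁻¹ • w₁‖ ^ q + ((1 - t) * m₂ / m) * ‖m₂⁻¹ • w₂‖ ^ q) := by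
    rw [hEq, norm_smul, Real.norm_of_nonneg hm.le,
      Real.mul_rpow hm.le (norm_nonneg _)]
    exact mul_le_mul_of_nonneg_left (norm_combo_rpow hq.le ha hc hac _ _)
      (Real.rpow_nonneg hm.le q)
  calc ‖t • w₁ + (1 - t) • w₂‖ ^ q / (q * m ^ (q - 1))
      ≤ m ^ q * ((t * m₁ / m) * ‖m₁⁻¹ • w₁‖ ^ q + ((1 - t) * m₂ / m) * ‖m₂⁻¹ • w₂‖ ^ q)
        / (q * m ^ (q - 1)) := by gcongr
  _ = t * (‖w₁‖ ^ q / (q * m₁ ^ (q - 1))) + (1 - t) * (‖w₂‖ ^ q / (q * m₂ ^ (q - 1))) := by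
    rw [norm_smul, norm_smul, Real.norm_of_nonneg (inv_nonneg.mpr hm₁.le),
      Real.norm_of_nonneg (inv_nonneg.mpr hm₂.le),
      Real.mul_rpow (inv_nonneg.mpr hm₁.le) (norm_nonneg _),
      Real.mul_rpow (inv_nonneg.mpr hm₂.le) (norm_nonneg _),
      Real.inv_rpow hm₁.le, Real.inv_rpow hm₂.le]
    have e : ∀ x : ℝ, 0 < x → x ^ q = x ^ (q - 1) * x := by
      intro x hx
      rw [Real.rpow_sub_one hx.ne']
      field_simp
    have h1 : (0:ℝ) < m₁ ^ (q - 1) := Real.rpow_pos_of_pos hm₁ _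
    have h2 : (0:ℝ) < m₂ ^ (q - 1) := Real.rpow_pos_of_pos hm₂ _
    have h3 : (0:ℝ) < m ^ (q - 1) := Real.rpow_pos_of_pos hm _
    rw [e m hm, e m₁ hm₁, e m₂ hm₂]
    field_simp

lemma scale_eq {E : Type*} [NormedAddCommGroup E] [NormedSpace ℝ E]
    {q : ℝ} (hq : 1 < q) {t m : ℝ} (ht : 0 < t) (hm : 0 < m) (w : E) :
    ‖t • w‖ ^ q / (q * (t * m) ^ (q - 1)) = t * (‖w‖ ^ q / (q * m ^ (q - 1))) := by
  have hq0 : (0:ℝ) < q := lt_trans one_pos hq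
  rw [norm_smul, Real.norm_of_nonneg ht.le, Real.mul_rpow ht.le (norm_nonneg _),
    Real.mul_rpow ht.le hm.le]
  have e : t ^ q = t ^ (q - 1) * t := by
    rw [Real.rpow_sub_one ht.ne']; field_simp
  have h1 : (0:ℝ) < t ^ (q - 1) := Real.rpow_pos_of_pos ht _
  have h2 : (0:ℝ) < m ^ (q - 1) := Real.rpow_pos_of_pos hm _
  rw [e]
  field_simp

/-- the kinetic-energy-type function `b` is convex on ℝ × ℝ^d. -/
theorem stmt_0 (d : ℕ) (hd : 1 ≤ d) (q : ℝ) (hq : 1 < q)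
    (b : ℝ × EuclideanSpace ℝ (Fin d) → EReal)
    (hb : ∀ m w, b (m, w) =
      if 0 < m then ((‖w‖ ^ q / (q * m ^ (q - 1)) : ℝ) : EReal)
      else if m = 0 ∧ w = 0 then 0 else ⊤) :
    ∀ (m₁ m₂ : ℝ) (w₁ w₂ : EuclideanSpace ℝ (Fin d)) (t : ℝ), 0 ≤ t → t ≤ 1 →
      b (t * m₁ + (1 - t) * m₂, t • w₁ + (1 - t) • w₂)
        ≤ (t : EReal) * b (m₁, w₁) + ((1 - t : ℝ) : EReal) * b (m₂, w₂) := by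
  intro m₁ m₂ w₁ w₂ t ht ht'
  -- b never takes value ⊥, and is ⊤ or a real coe
  have hcases : ∀ (m : ℝ) (w : EuclideanSpace ℝ (Fin d)),
      b (m, w) = ⊤ ∨ ∃ r : ℝ, b (m, w) = (r : EReal) := by
    intro m w
    rw [hb]
    split_ifs with h1 h2
    · exact Or.inr ⟨_, rfl⟩
    · exact Or.inr ⟨0, by norm_num⟩
    · exact Or.inl rfl
  have hnebot : ∀ (s : ℝ) (m : ℝ) (w : EuclideanSpace ℝ (Fin d)), 0 ≤ s →
      ((s : EReal) * b (m, w)) ≠ ⊥ := by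
    intro s m w hs
    rcases hcases m w with h | ⟨r, h⟩
    · rw [h]
      rcases eq_or_lt_of_le hs with h' | h'
      · simp [← h']
      · rw [EReal.coe_mul_top_of_pos h']; simp
    · rw [h, ← EReal.coe_mul]; exact EReal.coe_ne_bot _
  -- t = 0
  rcases eq_or_lt_of_le ht with rfl | ht0
  · simp
  rcases eq_or_lt_of_le ht' with rfl | ht1
  · simp
  -- now 0 < t < 1
  by_cases hT₂ : b (m₂, w₂) = ⊤
  · rw [hT₂, EReal.coe_mul_top_of_pos (by linarith), EReal.add_top_of_ne_bot (hnebot t m₁ w₁ ht)]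
    exact le_top
  by_cases hT₁ : b (m₁, w₁) = ⊤
  · rw [hT₁, EReal.coe_mul_top_of_pos (by exact_mod_cast ht0), EReal.top_add_of_ne_bot
      (hnebot (1 - t) m₂ w₂ (by linarith))]
    exact le_top
  -- both finite: extract the structure
  have good : ∀ (m : ℝ) (w : EuclideanSpace ℝ (Fin d)), b (m, w) ≠ ⊤ →
      0 < m ∨ (m = 0 ∧ w = 0) := by
    intro m w hT
    rw [hb] at hT
    by_cases h1 : 0 < m
    · exact Or.inl h1
    · by_cases h2 : m = 0 ∧ w = 0
      · exact Or.inr h2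
      · simp [h1, h2] at hT
  rcases good m₁ w₁ hT₁ with h₁ | ⟨rfl, rfl⟩
  · rcases good m₂ w₂ hT₂ with h₂ | ⟨rfl, rfl⟩
    · -- both positive: main inequality
      have hm : 0 < t * m₁ + (1 - t) * m₂ := by nlinarith
      rw [hb, hb, hb, if_pos h₁, if_pos h₂, if_pos hm, ← EReal.coe_mul, ← EReal.coe_mul,
        ← EReal.coe_add, EReal.coe_le_coe_iff]
      exact key_ineq' hq h₁ h₂ ht ht' rfl w₁ w₂
    · -- m₂ = 0, w₂ = 0
      have hm : 0 < t * m₁ + (1 - t) * 0 := by simpa using mul_pos ht0 h₁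
      rw [hb, hb, hb, if_pos hm, if_pos h₁, if_neg (lt_irrefl 0), if_pos ⟨rfl, rfl⟩]
      simp only [smul_zero, add_zero, mul_zero]
      rw [← EReal.coe_mul, EReal.coe_le_coe_iff]
      exact le_of_eq (scale_eq hq ht0 h₁ w₁)
  · rcases good m₂ w₂ hT₂ with h₂ | ⟨rfl, rfl⟩
    · -- m₁ = 0, w₁ = 0
      have h1t : 0 < 1 - t := by linarith
      have hm : 0 < t * 0 + (1 - t) * m₂ := by simpa using mul_pos h1t h₂
      rw [hb, hb, hb, if_pos hm, if_neg (lt_irrefl 0), if_pos ⟨rfl, rfl⟩, if_pos h₂]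
      simp only [smul_zero, zero_add, mul_zero, zero_mul]
      rw [← EReal.coe_mul, EReal.coe_le_coe_iff]
      exact le_of_eq (scale_eq hq h1t h₂ w₂)
    · -- both zero
      simp only [mul_zero, add_zero, smul_zero, zero_add]
      rw [hb, if_neg (lt_irrefl 0), if_pos ⟨rfl, rfl⟩]
      simp
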